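/- Let 0 < ρ ≤ ∞, I = (0, ρ) ⊂ ℝ, α > 0, k ≥ 0 an integer, g(x) = α·x^k, and c ∈ [−1, 1], f(x) = c·g(x). Then for every 3×3 positive semidefinite matrix A with entries in I, the matrix M with M_{ij} = g(a_{ij}) when (i,j) ∈ {1,2}×{1,2} ∪ {(3,3)} and M_{ij} = f(a_{ij}) otherwise, is positive semidefinite. -/

import Mathlib

open Matrix

lemma my_hadamard_posSemidef {n : Type*} [Fintype n] [DecidableEq n]
    {A B : Matrix n n ℝ} (hA : A.PosSemidef) (hB : B.PosSemidef) :
    (A ⊙ B).PosSemidef := by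
  open scoped MatrixOrder in
  obtain ⟨C, rfl⟩ : ∃ C : Matrix n n ℝ, A = Cᴴ * C := CStarAlgebra.nonneg_iff_eq_star_mul_self.mp hA.nonneg
  have hAsym : ∀ i j, (Cᴴ * C) j i = (Cᴴ * C) i j := fun i j => by
    simpa using (Matrix.posSemidef_conjTranspose_mul_self C).1.apply i j
  have hBsym : ∀ i j, B j i = B i j := fun i j => by simpa using hB.1.apply i j
  refine Matrix.PosSemidef.of_dotProduct_mulVec_nonneg ?_ ?_
  · unfold Matrix.IsHermitian
    ext i j
    simp only [Matrix.hadamard_apply, Matrix.conjTranspose_apply, star_trivial]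
    rw [hAsym i j, hBsym i j]
  · intro x
    have key : (star x) ⬝ᵥ ((Cᴴ * C) ⊙ B) *ᵥ x
        = ∑ k, (star fun i => C k i * x i) ⬝ᵥ B *ᵥ (fun i => C k i * x i) := by
      simp only [dotProduct, Matrix.mulVec, Matrix.hadamard_apply,
        Matrix.mul_apply, Matrix.conjTranspose_apply, Pi.star_apply, star_trivial,
        Finset.sum_mul, Finset.mul_sum]
      have h1 : ∀ a : n, ∑ b : n, ∑ k : n, x a * (C k a * C k b * B a b * x b)
          = ∑ k : n, ∑ b : n, x a * (C k a * C k b * B a b * x b) :=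
        fun a => Finset.sum_comm
      simp_rw [h1]
      rw [Finset.sum_comm]
      exact Finset.sum_congr rfl fun k _ => Finset.sum_congr rfl fun a _ =>
        Finset.sum_congr rfl fun b _ => by ring
    rw [key]
    exact Finset.sum_nonneg fun k _ => hB.dotProduct_mulVec_nonneg _

lemma my_psd_smul {n : Type*} [Fintype n] {M : Matrix n n ℝ} (h : M.PosSemidef)
    {a : ℝ} (ha : 0 ≤ a) : (a • M).PosSemidef := by
  refine Matrix.PosSemidef.of_dotProduct_mulVec_nonneg ?_ ?_
  · have hs : ∀ i j, M j i = M i j := fun i j => by simpa using h.1.apply i j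
    unfold Matrix.IsHermitian
    ext i j
    simp [Matrix.conjTranspose_apply, hs i j]
  · intro x
    rw [Matrix.smul_mulVec]
    simp only [dotProduct_smul, smul_eq_mul]
    exact mul_nonneg ha (h.dotProduct_mulVec_nonneg x)

lemma my_hpow_posSemidef {n : Type*} [Fintype n] [DecidableEq n]
    {A : Matrix n n ℝ} (hA : A.PosSemidef) (k : ℕ) :
    (Matrix.of fun i j => A i j ^ k).PosSemidef := by
  induction k with
  | zero =>
    simp only [pow_zero]
    refine Matrix.PosSemidef.of_dotProduct_mulVec_nonneg ?_ ?_
    · ext i j; simp [Matrix.IsHermitian, Matrix.conjTranspose_apply]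
    · intro x
      have : (star x) ⬝ᵥ (Matrix.of fun _ _ : n => (1:ℝ)) *ᵥ x = (∑ i, x i) ^ 2 := by
        simp [dotProduct, Matrix.mulVec, Finset.mul_sum, sq, Finset.sum_mul,
          mul_comm]
      rw [this]; positivity
  | succ m ih =>
    have : (Matrix.of fun i j => A i j ^ (m+1)) = A ⊙ (Matrix.of fun i j => A i j ^ m) := by
      ext i j; simp [Matrix.hadamard_apply, pow_succ, mul_comm]
    rw [this]
    exact my_hadamard_posSemidef hA ih

theorem scalar_multiple_preserves_T3 (ρ : EReal) (hρ : 0 < ρ)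
    (α : ℝ) (hα : 0 < α) (k : ℕ) (c : ℝ) (hc : c ∈ Set.Icc (-1 : ℝ) 1)
    (A : Matrix (Fin 3) (Fin 3) ℝ) (hA : A.PosSemidef)
    (hAI : ∀ i j, 0 < A i j ∧ (A i j : EReal) < ρ) :
    (Matrix.of fun i j : Fin 3 =>
      if (i.val ≤ 1 ∧ j.val ≤ 1) ∨ (i = 2 ∧ j = 2)
      then α * A i j ^ k else c * (α * A i j ^ k)).PosSemidef := by
  obtain ⟨hc1, hc2⟩ := hc
  set E : Matrix (Fin 3) (Fin 3) ℝ := Matrix.of fun i j : Fin 3 =>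
    if (i.val ≤ 1 ∧ j.val ≤ 1) ∨ (i = 2 ∧ j = 2) then (1:ℝ) else c with hE
  have hEpsd : E.PosSemidef := by
    refine Matrix.PosSemidef.of_dotProduct_mulVec_nonneg ?_ ?_
    · ext i j
      fin_cases i <;> fin_cases j <;> simp [hE, Matrix.conjTranspose_apply]
    · intro x
      have expand : (star x) ⬝ᵥ E *ᵥ x =
          (x 0 + x 1 + c * x 2)^2 + (1 - c^2) * (x 2)^2 := by
        simp [hE, dotProduct, Matrix.mulVec, Fin.sum_univ_three]
        ring
      rw [expand]
      have h1 : (0:ℝ) ≤ (x 0 + x 1 + c * x 2)^2 := sq_nonneg _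
      have h2 : (0:ℝ) ≤ 1 - c^2 := by nlinarith
      have h3 : (0:ℝ) ≤ (x 2)^2 := sq_nonneg _
      nlinarith
  have hB := my_hpow_posSemidef hA k
  have key : (Matrix.of fun i j : Fin 3 =>
      if (i.val ≤ 1 ∧ j.val ≤ 1) ∨ (i = 2 ∧ j = 2)
      then α * A i j ^ k else c * (α * A i j ^ k))
      = α • (E ⊙ (Matrix.of fun i j => A i j ^ k)) := by
    ext i j
    simp only [Matrix.of_apply, Matrix.smul_apply, Matrix.hadamard_apply, hE, smul_eq_mul]
    split_ifs <;> ring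
  rw [key]
  exact my_psd_smul (my_hadamard_posSemidef hEpsd hB) (le_of_lt hα)
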